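/- Euler's identity: (x; q)_∞ := ∏_{k=0}^∞ (1 − x q^k) = Σ_{m=0}^∞ (−1)^m q^{m(m−1)/2} x^m / (q)_m, where (q)_m = ∏_{j=1}^m (1 − q^j), as an identity of formal power series in x over ℤ[[q]]. -/

import Mathlib

noncomputable section

open PowerSeries Finset

private def Pp (K : ℕ) : PowerSeries (PowerSeries ℤ) :=
  ∏ k ∈ Finset.range K,
    (1 - PowerSeries.C (R := PowerSeries ℤ) (PowerSeries.X ^ k) * PowerSeries.X)

private lemma coeff_Pp_zero (K : ℕ) : coeff (R := PowerSeries ℤ) 0 (Pp K) = 1 := by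
  simp [Pp, coeff_zero_eq_constantCoeff, map_prod]

private lemma coeff_Pp_succ (K m : ℕ) :
    coeff (R := PowerSeries ℤ) (m + 1) (Pp (K + 1)) =
      coeff (R := PowerSeries ℤ) (m + 1) (Pp K) - X ^ K * coeff (R := PowerSeries ℤ) m (Pp K) := by
  have h : Pp (K + 1) = Pp K - PowerSeries.C (R := PowerSeries ℤ) (X ^ K) * (Pp K * X) := by
    rw [Pp, Finset.prod_range_succ, ← Pp]; ring
  rw [h, map_sub, coeff_C_mul, coeff_succ_mul_X]

private lemma coeff_Pp_eq_zero : ∀ K m : ℕ, K < m → coeff (R := PowerSeries ℤ) m (Pp K) = 0 := by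
  intro K
  induction K with
  | zero =>
    intro m hm
    cases m with
    | zero => omega
    | succ n => simp [Pp, coeff_one]
  | succ K ih =>
    intro m hm
    cases m with
    | zero => omega
    | succ n =>
      rw [coeff_Pp_succ, ih (n + 1) (by omega), ih n (by omega)]
      ring

private lemma main_identity : ∀ K m : ℕ,
    (∏ j ∈ Finset.Icc 1 m, (1 - (PowerSeries.X : PowerSeries ℤ) ^ j)) *
      coeff (R := PowerSeries ℤ) m (Pp K) =
    (-1) ^ m * (PowerSeries.X : PowerSeries ℤ) ^ (m * (m - 1) / 2) *
      ∏ i ∈ Finset.range m, (1 - (PowerSeries.X : PowerSeries ℤ) ^ (K - i)) := by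
  intro K
  induction K with
  | zero =>
    intro m
    cases m with
    | zero => simp [coeff_Pp_zero]
    | succ n =>
      rw [coeff_Pp_eq_zero 0 (n + 1) (by omega), mul_zero]
      rw [Finset.prod_eq_zero (Finset.self_mem_range_succ n)]
      · ring
      · simp
  | succ K ih =>
    intro m
    cases m with
    | zero => simp [coeff_Pp_zero]
    | succ n =>
      rcases le_or_gt (n + 1) (K + 1) with hle | hlt
      · -- n ≤ K
        have hn : n ≤ K := by omega
        rw [coeff_Pp_succ, mul_sub]
        have e1 := ih (n + 1)
        have e2 := ih n
        have hsplit : (∏ j ∈ Finset.Icc 1 (n + 1), (1 - (PowerSeries.X : PowerSeries ℤ) ^ j)) =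
            (∏ j ∈ Finset.Icc 1 n, (1 - (PowerSeries.X : PowerSeries ℤ) ^ j)) *
              (1 - X ^ (n + 1)) := by
          rw [← Finset.prod_Icc_succ_top (by omega : 1 ≤ n + 1)]
        have h2 : (∏ j ∈ Finset.Icc 1 (n + 1), (1 - (PowerSeries.X : PowerSeries ℤ) ^ j)) *
            (X ^ K * coeff (R := PowerSeries ℤ) n (Pp K)) =
            X ^ K * (1 - X ^ (n + 1)) *
              ((-1) ^ n * X ^ (n * (n - 1) / 2) *
                ∏ i ∈ Finset.range n, (1 - (PowerSeries.X : PowerSeries ℤ) ^ (K - i))) := by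
          rw [hsplit]; rw [← e2]; ring
        rw [e1, h2]
        -- now pure algebra about products
        have hL : (∏ i ∈ Finset.range (n + 1), (1 - (PowerSeries.X : PowerSeries ℤ) ^ (K - i)))
            = (∏ i ∈ Finset.range n, (1 - (PowerSeries.X : PowerSeries ℤ) ^ (K - i))) *
              (1 - X ^ (K - n)) := by
          rw [Finset.prod_range_succ]
        have hR : (∏ i ∈ Finset.range (n + 1), (1 - (PowerSeries.X : PowerSeries ℤ) ^ (K + 1 - i)))
            = (1 - X ^ (K + 1)) *
              ∏ i ∈ Finset.range n, (1 - (PowerSeries.X : PowerSeries ℤ) ^ (K - i)) := by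
          rw [Finset.prod_range_succ']
          have h3 : ∀ i : ℕ, K + 1 - (i + 1) = K - i := fun i => by omega
          simp only [h3, Nat.sub_zero]
          ring
        rw [hL, hR]
        have hT : (n + 1) * (n + 1 - 1) / 2 = n * (n - 1) / 2 + n := Nat.triangle_succ n
        rw [hT]
        have hpow : (X : PowerSeries ℤ) ^ n * X ^ (K - n) = X ^ K := by
          rw [← pow_add]; congr 1; omega
        linear_combination ((-1 : PowerSeries ℤ) ^ n * X ^ (n * (n - 1) / 2) *
          ∏ i ∈ Finset.range n, (1 - (PowerSeries.X : PowerSeries ℤ) ^ (K - i))) * hpow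
      · -- K + 1 < n + 1
        rw [coeff_Pp_eq_zero (K + 1) (n + 1) hlt, mul_zero,
          Finset.prod_eq_zero (Finset.mem_range.mpr (by omega : K + 1 < n + 1))]
        · ring
        · simp

private lemma X_pow_dvd_prod_sub_one (n : ℕ) (f : ℕ → ℕ) :
    ∀ (s : Finset ℕ), (∀ i ∈ s, n ≤ f i) →
      (PowerSeries.X : PowerSeries ℤ) ^ n ∣ (∏ i ∈ s, (1 - (PowerSeries.X : PowerSeries ℤ) ^ (f i))) - 1 := by
  intro s
  induction s using Finset.induction_on with
  | empty => simp
  | insert _ _ hns ih =>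
    rename_i a t
    intro hs
    rw [Finset.prod_insert hns]
    have h1 : (1 - (PowerSeries.X : PowerSeries ℤ) ^ (f a)) *
        (∏ i ∈ t, (1 - (PowerSeries.X : PowerSeries ℤ) ^ (f i))) - 1 =
        (1 - X ^ (f a)) * ((∏ i ∈ t, (1 - (PowerSeries.X : PowerSeries ℤ) ^ (f i))) - 1)
          - X ^ (f a) := by ring
    rw [h1]
    apply dvd_sub
    · exact Dvd.dvd.mul_left (ih (fun i hi => hs i (Finset.mem_insert_of_mem hi))) _
    · exact pow_dvd_pow _ (hs a (Finset.mem_insert_self a t))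

/-- **Euler's identity** `(x;q)_∞ = Σ_{m≥0} (−1)^m q^{m(m−1)/2} x^m / (q)_m`.
We work in `ℤ[[q]][[x]]`, i.e. power series in `x` whose coefficients are power
series in `q`.  The infinite product `F = ∏_{k=0}^∞ (1 − x q^k)` is characterized by
the fact that each coefficient (of `x^m q^d`) agrees with that of the partial products
`∏_{k<K} (1 − x q^k)` as soon as `d < K`.  The identity is stated with denominators
cleared: for every `m`, `(q)_m · [x^m] F = (−1)^m q^{m(m−1)/2}`. -/
theorem euler_pochhammer_expansion (F : PowerSeries (PowerSeries ℤ))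
    (hF : ∀ K m d : ℕ, d < K →
      PowerSeries.coeff (R := ℤ) d (PowerSeries.coeff (R := PowerSeries ℤ) m F) =
        PowerSeries.coeff (R := ℤ) d (PowerSeries.coeff (R := PowerSeries ℤ) m
          (∏ k ∈ Finset.range K,
            (1 - PowerSeries.C (R := PowerSeries ℤ) (PowerSeries.X ^ k) * PowerSeries.X)))) :
    ∀ m : ℕ,
      (∏ j ∈ Finset.Icc 1 m, (1 - (PowerSeries.X : PowerSeries ℤ) ^ j)) *
          PowerSeries.coeff (R := PowerSeries ℤ) m F =
        (-1) ^ m * (PowerSeries.X : PowerSeries ℤ) ^ (m * (m - 1) / 2) := by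
  intro m
  ext d
  set K := d + m + 1 with hK
  have step1 : PowerSeries.coeff (R := ℤ) d
      ((∏ j ∈ Finset.Icc 1 m, (1 - (PowerSeries.X : PowerSeries ℤ) ^ j)) *
        PowerSeries.coeff (R := PowerSeries ℤ) m F) =
      PowerSeries.coeff (R := ℤ) d
      ((∏ j ∈ Finset.Icc 1 m, (1 - (PowerSeries.X : PowerSeries ℤ) ^ j)) *
        PowerSeries.coeff (R := PowerSeries ℤ) m (Pp K)) := by
    rw [PowerSeries.coeff_mul, PowerSeries.coeff_mul]
    apply Finset.sum_congr rfl
    intro p hp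
    rw [Finset.HasAntidiagonal.mem_antidiagonal] at hp
    rw [hF K m p.2 (by omega)]
    rfl
  rw [step1, main_identity K m]
  have hdvd : (PowerSeries.X : PowerSeries ℤ) ^ (d + 1) ∣
      ((-1) ^ m * (PowerSeries.X : PowerSeries ℤ) ^ (m * (m - 1) / 2) *
        ∏ i ∈ Finset.range m, (1 - (PowerSeries.X : PowerSeries ℤ) ^ (K - i)))
      - (-1) ^ m * (PowerSeries.X : PowerSeries ℤ) ^ (m * (m - 1) / 2) := by
    have h1 : ((-1) ^ m * (PowerSeries.X : PowerSeries ℤ) ^ (m * (m - 1) / 2) *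
        ∏ i ∈ Finset.range m, (1 - (PowerSeries.X : PowerSeries ℤ) ^ (K - i)))
        - (-1) ^ m * (PowerSeries.X : PowerSeries ℤ) ^ (m * (m - 1) / 2) =
        (-1) ^ m * (PowerSeries.X : PowerSeries ℤ) ^ (m * (m - 1) / 2) *
        ((∏ i ∈ Finset.range m, (1 - (PowerSeries.X : PowerSeries ℤ) ^ (K - i))) - 1) := by
      ring
    rw [h1]
    exact Dvd.dvd.mul_left
      (X_pow_dvd_prod_sub_one (d + 1) (fun i => K - i) (Finset.range m)
        (fun i hi => by simp only [Finset.mem_range] at hi; show d + 1 ≤ K - i; omega)) _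
  have hz := (PowerSeries.X_pow_dvd_iff.mp hdvd) d (by omega)
  rw [map_sub] at hz
  linarith [hz]

end
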